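/- arXiv:1201.3112 — 2 statements merged into one kernel-verified Lean document; each statement's English description precedes it below -/
import Mathlib

section
/- Assume l₁+l₂ ≥ 3 and l₂+l₃ ≥ 3 and Γ is nondegenerate. Then the Lie algebra S(l₁,l₂,l₃;0,Γ) is generated (as a Lie algebra) by the set {D_{p,q}(x^α t^i) : p,q ∈ {1,…,l}, α ∈ Γ∖{0}, i ∈ ℕ^{l₁+l₂}}; in particular every D_{p,q}(t^i) lies in the Lie subalgebra generated by this set. -/
open scoped BigOperators

namespace SDF

variable (F : Type) [Field F] [IsAlgClosed F] [CharZero F]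
variable (l₁ l₂ l₃ : ℕ) (Γ : AddSubgroup (Fin (l₂ + l₃) → F))

/-- The semigroup algebra `A(l₁,l₂,l₃;Γ) = F[Γ × ℕ^{l₁+l₂}]`,
with basis `x^α t^i` for `α ∈ Γ`, `i ∈ ℕ^{l₁+l₂}`. -/
abbrev Alg : Type := AddMonoidAlgebra F (↥Γ × (Fin (l₁ + l₂) →₀ ℕ))

/-- The basis monomial `x^α t^i`. -/
noncomputable def mono (α : Γ) (i : Fin (l₁ + l₂) →₀ ℕ) : Alg F l₁ l₂ l₃ Γ :=
  AddMonoidAlgebra.single (α, i) 1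

/-- The `p`-th coordinate of `α ∈ Γ ⊆ F^{l₂+l₃}`, with the convention `α_p = 0` for `p ≤ l₁`. -/
def acoord (p : Fin (l₁ + l₂ + l₃)) (α : Γ) : F :=
  if h : l₁ ≤ (p : ℕ) then (α : Fin (l₂ + l₃) → F) ⟨(p : ℕ) - l₁, by have := p.isLt; omega⟩
  else 0

/-- The `p`-th coordinate of a general `μ ∈ F^{l₂+l₃}`, with the convention `μ_p = 0` for `p ≤ l₁`. -/
def fcoord (p : Fin (l₁ + l₂ + l₃)) (μ : Fin (l₂ + l₃) → F) : F :=
  if h : l₁ ≤ (p : ℕ) then μ ⟨(p : ℕ) - l₁, by have := p.isLt; omega⟩ else 0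

/-- The `p`-th component of `i ∈ ℕ^{l₁+l₂}`, with the convention `i_p = 0` for `p > l₁+l₂`. -/
def icoord (p : Fin (l₁ + l₂ + l₃)) (i : Fin (l₁ + l₂) →₀ ℕ) : ℕ :=
  if h : (p : ℕ) < l₁ + l₂ then i ⟨(p : ℕ), h⟩ else 0

/-- `i - 1_[p]` (truncated subtraction; only used with coefficient `i_p`). -/
noncomputable def lower (p : Fin (l₁ + l₂ + l₃)) (i : Fin (l₁ + l₂) →₀ ℕ) : Fin (l₁ + l₂) →₀ ℕ :=
  if h : (p : ℕ) < l₁ + l₂ then i - Finsupp.single ⟨(p : ℕ), h⟩ 1 else i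

/-- The derivation `∂_p` of `A(l₁,l₂,l₃;Γ)`:
`∂_p(x^α t^i) = α_p x^α t^i + i_p x^α t^{i - 1_[p]}`. -/
noncomputable def pd (p : Fin (l₁ + l₂ + l₃)) :
    Alg F l₁ l₂ l₃ Γ →ₗ[F] Alg F l₁ l₂ l₃ Γ :=
  (Finsupp.lsum F fun g : ↥Γ × (Fin (l₁ + l₂) →₀ ℕ) =>
    LinearMap.toSpanSingleton F (Alg F l₁ l₂ l₃ Γ)
      (acoord F l₁ l₂ l₃ Γ p g.1 • mono F l₁ l₂ l₃ Γ g.1 g.2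
        + (icoord l₁ l₂ l₃ p g.2 : F) • mono F l₁ l₂ l₃ Γ g.1 (lower l₁ l₂ l₃ p g.2))) ∘ₗ
    (AddMonoidAlgebra.coeffLinearEquiv F).toLinearMap

/-- The Witt algebra `W(l₁,l₂,l₃;Γ) = A·D`; the tuple `u : Wt` represents `Σ_p u_p ∂_p`. -/
abbrev Wt : Type := Fin (l₁ + l₂ + l₃) → Alg F l₁ l₂ l₃ Γ

/-- The Lie bracket of `W(l₁,l₂,l₃;Γ)`:
`[Σ_p u_p ∂_p, Σ_q v_q ∂_q] = Σ_{p,q} (u_p ∂_p(v_q) - v_p ∂_p(u_q)) ∂_q`. -/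
noncomputable def wbr (u v : Wt F l₁ l₂ l₃ Γ) : Wt F l₁ l₂ l₃ Γ :=
  fun r => ∑ p, (u p * pd F l₁ l₂ l₃ Γ p (v r) - v p * pd F l₁ l₂ l₃ Γ p (u r))

/-- `D_{p,q}(u) = ∂_p(u) ∂_q - ∂_q(u) ∂_p`. -/
noncomputable def Dpq (p q : Fin (l₁ + l₂ + l₃)) (u : Alg F l₁ l₂ l₃ Γ) :
    Wt F l₁ l₂ l₃ Γ :=
  Pi.single q (pd F l₁ l₂ l₃ Γ p u) - Pi.single p (pd F l₁ l₂ l₃ Γ q u)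

/-- The divergence-free algebra `S(l₁,l₂,l₃;0,Γ) = Span{D_{p,q}(u)}`. -/
noncomputable def Ssub : Submodule F (Wt F l₁ l₂ l₃ Γ) :=
  Submodule.span F {w | ∃ p q u, w = Dpq F l₁ l₂ l₃ Γ p q u}

/-- `Γ` is nondegenerate: it contains an `F`-basis of `F^{l₂+l₃}`, i.e. it spans. -/
def Nondeg : Prop := Submodule.span F (Γ : Set (Fin (l₂ + l₃) → F)) = ⊤

/-- The divergence `div(Σ_p u_p ∂_p) = Σ_p ∂_p(u_p)`. -/
noncomputable def dvg (w : Wt F l₁ l₂ l₃ Γ) : Alg F l₁ l₂ l₃ Γ :=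
  ∑ p, pd F l₁ l₂ l₃ Γ p (w p)

/-- The action of `Σ_p u_p ∂_p ∈ W` on `A_μ` (the space `A` with basis `v_{β,i}` the monomials):
`(u ∂_p) . v = u * (∂_p + μ_p) v`. On basis elements this gives exactly the defining formulas
of the module `A_μ`. -/
noncomputable def actW (μ : Fin (l₂ + l₃) → F) (X : Wt F l₁ l₂ l₃ Γ) :
    Alg F l₁ l₂ l₃ Γ →ₗ[F] Alg F l₁ l₂ l₃ Γ :=
  ∑ p, (LinearMap.mulLeft F (X p)).comp
    (pd F l₁ l₂ l₃ Γ p + fcoord F l₁ l₂ l₃ p μ • LinearMap.id)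

/-- The element `Σ_p a_p ∂_p` of `D ⊆ W`. -/
noncomputable def wD (a : Fin (l₁ + l₂ + l₃) → F) : Wt F l₁ l₂ l₃ Γ :=
  fun p => algebraMap F (Alg F l₁ l₂ l₃ Γ) (a p)

/-- The element `∂_p ∈ W`. -/
noncomputable def wdelta (p : Fin (l₁ + l₂ + l₃)) : Wt F l₁ l₂ l₃ Γ :=
  Pi.single p 1

/-- `β(∂) = Σ_{p>l₁} a_p β_p` for `∂ = Σ_p a_p ∂_p`. -/
def beval (β : Fin (l₂ + l₃) → F) (a : Fin (l₁ + l₂ + l₃) → F) : F :=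
  ∑ p, a p * fcoord F l₁ l₂ l₃ p β


/-- The Lie subalgebra of `W(l₁,l₂,l₃;Γ)` generated by a set: the smallest subspace
containing the set and closed under the bracket. -/
noncomputable def liegen (s : Set (Wt F l₁ l₂ l₃ Γ)) : Submodule F (Wt F l₁ l₂ l₃ Γ) :=
  sInf {N : Submodule F (Wt F l₁ l₂ l₃ Γ) |
    s ⊆ N ∧ ∀ x ∈ N, ∀ y ∈ N, wbr F l₁ l₂ l₃ Γ x y ∈ N}

set_option linter.unusedSectionVars false
set_option maxHeartbeats 2000000

section CorProof
variable {F l₁ l₂ l₃ Γ}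

local notation "𝕞" => mono F l₁ l₂ l₃ Γ
local notation "Pd" => pd F l₁ l₂ l₃ Γ
local notation "𝔇" => Dpq F l₁ l₂ l₃ Γ
local notation "ac" => acoord F l₁ l₂ l₃ Γ
local notation "ic" => icoord l₁ l₂ l₃
local notation "lo" => lower l₁ l₂ l₃
local notation "Br" => wbr F l₁ l₂ l₃ Γ

lemma mono_mul (α β : Γ) (i j : Fin (l₁ + l₂) →₀ ℕ) :
    𝕞 α i * 𝕞 β j = 𝕞 (α + β) (i + j) := by
  simp [mono, AddMonoidAlgebra.single_mul_single]

lemma pd_mono (p : Fin (l₁ + l₂ + l₃)) (α : Γ) (i : Fin (l₁ + l₂) →₀ ℕ) :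
    Pd p (𝕞 α i) = ac p α • 𝕞 α i + (ic p i : F) • 𝕞 α (lo p i) := by
  simp [pd, mono, AddMonoidAlgebra.coeffLinearEquiv, AddMonoidAlgebra.coeff_single,
    LinearMap.toSpanSingleton_apply]

lemma acoord_zero (p : Fin (l₁ + l₂ + l₃)) : ac p (0 : Γ) = 0 := by
  unfold acoord; split <;> simp

lemma acoord_neg (p : Fin (l₁ + l₂ + l₃)) (α : Γ) : ac p (-α) = - ac p α := by
  unfold acoord; split <;> simp

lemma acoord_add (p : Fin (l₁ + l₂ + l₃)) (α β : Γ) : ac p (α + β) = ac p α + ac p β := by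
  unfold acoord; split <;> simp

lemma icoord_add (p : Fin (l₁ + l₂ + l₃)) (i j : Fin (l₁ + l₂) →₀ ℕ) :
    ic p (i + j) = ic p i + ic p j := by
  unfold icoord; split <;> simp

lemma icoord_zero (p : Fin (l₁ + l₂ + l₃)) : ic p (0 : Fin (l₁ + l₂) →₀ ℕ) = 0 := by
  unfold icoord; split <;> simp

lemma icoord_big {p : Fin (l₁ + l₂ + l₃)} (h : ¬ (p : ℕ) < l₁ + l₂)
    (i : Fin (l₁ + l₂) →₀ ℕ) : ic p i = 0 := dif_neg h

lemma lower_big {p : Fin (l₁ + l₂ + l₃)} (h : ¬ (p : ℕ) < l₁ + l₂)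
    (i : Fin (l₁ + l₂) →₀ ℕ) : lo p i = i := dif_neg h

lemma icoord_lower_self {p : Fin (l₁ + l₂ + l₃)} (hp : (p : ℕ) < l₁ + l₂)
    (i : Fin (l₁ + l₂) →₀ ℕ) : ic p (lo p i) = ic p i - 1 := by
  unfold icoord lower
  rw [dif_pos hp, dif_pos hp, dif_pos hp]
  simp [Finsupp.tsub_apply]

lemma icoord_lower_ne {p q : Fin (l₁ + l₂ + l₃)} (hpq : (p : ℕ) ≠ (q : ℕ))
    (i : Fin (l₁ + l₂) →₀ ℕ) : ic p (lo q i) = ic p i := by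
  unfold icoord lower
  by_cases hq : (q : ℕ) < l₁ + l₂
  · rw [dif_pos hq]
    by_cases hp : (p : ℕ) < l₁ + l₂
    · rw [dif_pos hp, dif_pos hp]
      rw [Finsupp.tsub_apply, Finsupp.single_apply, if_neg (by simp [Fin.ext_iff]; omega)]
      simp
    · rw [dif_neg hp, dif_neg hp]
  · rw [dif_neg hq]

lemma lower_comm (p q : Fin (l₁ + l₂ + l₃)) (i : Fin (l₁ + l₂) →₀ ℕ) :
    lo p (lo q i) = lo q (lo p i) := by
  unfold lower
  by_cases hp : (p : ℕ) < l₁ + l₂ <;> by_cases hq : (q : ℕ) < l₁ + l₂ <;>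
    simp [hp, hq, tsub_right_comm]

lemma lower_add_left {p : Fin (l₁ + l₂ + l₃)} (hp : (p : ℕ) < l₁ + l₂)
    {i : Fin (l₁ + l₂) →₀ ℕ} (hi : ic p i ≠ 0) (j : Fin (l₁ + l₂) →₀ ℕ) :
    lo p (i + j) = lo p i + j := by
  unfold lower
  rw [dif_pos hp, dif_pos hp]
  unfold icoord at hi; rw [dif_pos hp] at hi
  ext c
  rcases eq_or_ne c ⟨(p : ℕ), hp⟩ with h | h
  · subst h
    simp [Finsupp.tsub_apply]
    omega
  · simp [Finsupp.tsub_apply, Finsupp.single_apply, Ne.symm h]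

lemma lower_add_right {p : Fin (l₁ + l₂ + l₃)} (hp : (p : ℕ) < l₁ + l₂)
    {j : Fin (l₁ + l₂) →₀ ℕ} (hj : ic p j ≠ 0) (i : Fin (l₁ + l₂) →₀ ℕ) :
    lo p (i + j) = i + lo p j := by
  rw [add_comm i j, lower_add_left hp hj]
  exact add_comm _ _

lemma lower_add_single {p : Fin (l₁ + l₂ + l₃)} (hp : (p : ℕ) < l₁ + l₂)
    (i : Fin (l₁ + l₂) →₀ ℕ) :
    lo p (i + Finsupp.single ⟨(p : ℕ), hp⟩ 1) = i := by
  unfold lower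
  rw [dif_pos hp]
  ext c
  simp [Finsupp.tsub_apply]

lemma icoord_add_single {p : Fin (l₁ + l₂ + l₃)} (hp : (p : ℕ) < l₁ + l₂)
    (i : Fin (l₁ + l₂) →₀ ℕ) :
    ic p (i + Finsupp.single ⟨(p : ℕ), hp⟩ 1) = ic p i + 1 := by
  unfold icoord
  rw [dif_pos hp, dif_pos hp]
  simp

lemma icoord_add_single_ne {p q : Fin (l₁ + l₂ + l₃)} (hp : (p : ℕ) < l₁ + l₂)
    (hqp : (q : ℕ) ≠ (p : ℕ)) (i : Fin (l₁ + l₂) →₀ ℕ) :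
    ic q (i + Finsupp.single ⟨(p : ℕ), hp⟩ 1) = ic q i := by
  unfold icoord
  by_cases hq : (q : ℕ) < l₁ + l₂
  · rw [dif_pos hq, dif_pos hq]
    rw [Finsupp.add_apply, Finsupp.single_apply, if_neg (by simp [Fin.ext_iff]; omega)]
    simp
  · rw [dif_neg hq, dif_neg hq]

lemma pd_comm (p q : Fin (l₁ + l₂ + l₃)) (u : Alg F l₁ l₂ l₃ Γ) :
    Pd p (Pd q u) = Pd q (Pd p u) := by
  induction u using AddMonoidAlgebra.induction_linear with
  | zero => simp
  | add f g hf hg => rw [map_add, map_add, map_add, map_add, hf, hg]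
  | single a b =>
    have e1 : (AddMonoidAlgebra.single a b : Alg F l₁ l₂ l₃ Γ) = b • 𝕞 a.1 a.2 := by
      simp [mono, AddMonoidAlgebra.smul_single']
    rw [e1, map_smul, map_smul, map_smul, map_smul]
    congr 1
    rcases eq_or_ne (p : ℕ) (q : ℕ) with h | h
    · have : p = q := Fin.ext h
      subst this; rfl
    · simp only [pd_mono, map_add, map_smul, pd_mono, icoord_lower_ne h,
        icoord_lower_ne (Ne.symm h), smul_add, smul_smul]
      rw [lower_comm q p]
      module

end CorProof
section CorProof2
variable {F l₁ l₂ l₃ Γ}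

local notation "𝕞" => mono F l₁ l₂ l₃ Γ
local notation "Pd" => pd F l₁ l₂ l₃ Γ
local notation "𝔇" => Dpq F l₁ l₂ l₃ Γ
local notation "ac" => acoord F l₁ l₂ l₃ Γ
local notation "ic" => icoord l₁ l₂ l₃
local notation "lo" => lower l₁ l₂ l₃
local notation "Br" => wbr F l₁ l₂ l₃ Γ

lemma of_eq_mono (g : ↥Γ × (Fin (l₁ + l₂) →₀ ℕ)) :
    (AddMonoidAlgebra.of F (↥Γ × (Fin (l₁ + l₂) →₀ ℕ)) (Multiplicative.ofAdd g))
      = 𝕞 g.1 g.2 := by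
  simp [AddMonoidAlgebra.of_apply, mono]

lemma pd_mul_mono (p : Fin (l₁ + l₂ + l₃)) (α β : Γ) (i j : Fin (l₁ + l₂) →₀ ℕ) :
    Pd p (𝕞 α i * 𝕞 β j) = Pd p (𝕞 α i) * 𝕞 β j + 𝕞 α i * Pd p (𝕞 β j) := by
  rw [mono_mul, pd_mono, pd_mono, pd_mono]
  by_cases hp : (p : ℕ) < l₁ + l₂
  · by_cases hi : ic p i = 0
    · by_cases hj : ic p j = 0
      · simp only [icoord_add, hi, hj, Nat.cast_zero, zero_smul, add_zero, Nat.cast_add,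
          acoord_add, add_smul, add_mul, mul_add, smul_mul_assoc, mul_smul_comm, mono_mul]
        try module
      · rw [lower_add_right hp hj]
        simp only [icoord_add, hi, hj, Nat.cast_zero, zero_smul, add_zero, zero_add,
          Nat.cast_add, acoord_add, add_smul, add_mul, mul_add, smul_mul_assoc,
          mul_smul_comm, mono_mul]
        try module
    · by_cases hj : ic p j = 0
      · rw [lower_add_left hp hi]
        simp only [icoord_add, hi, hj, Nat.cast_zero, zero_smul, add_zero, zero_add,
          Nat.cast_add, acoord_add, add_smul, add_mul, mul_add, smul_mul_assoc,
          mul_smul_comm, mono_mul]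
        try module
      · rw [lower_add_left hp hi]
        have h2 : i + lo p j = lo p i + j := by
          rw [← lower_add_right hp hj, lower_add_left hp hi]
        simp only [icoord_add, Nat.cast_add, acoord_add, add_smul, add_mul, mul_add,
          smul_mul_assoc, mul_smul_comm, mono_mul, h2]
        try module
  · simp only [lower_big hp, icoord_big hp, Nat.cast_zero, zero_smul, add_zero,
      acoord_add, add_smul, add_mul, mul_add, smul_mul_assoc, mul_smul_comm, mono_mul]
    try module

lemma pd_mul (p : Fin (l₁ + l₂ + l₃)) (u v : Alg F l₁ l₂ l₃ Γ) :
    Pd p (u * v) = Pd p u * v + u * Pd p v := by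
  induction u using AddMonoidAlgebra.induction_on with
  | add f g hf hg => rw [add_mul, map_add, hf, hg, map_add]; ring
  | smul r f hf => simp only [smul_mul_assoc, map_smul, hf, smul_add]
  | of g =>
    induction v using AddMonoidAlgebra.induction_on with
    | add f g hf hg => rw [mul_add, map_add, hf, hg, map_add]; ring
    | smul r f hf => simp only [mul_smul_comm, map_smul, hf, smul_add]
    | of g' => rw [of_eq_mono, of_eq_mono]; exact pd_mul_mono p g.1 g'.1 g.2 g'.2

lemma pd_pi_single (x s c : Fin (l₁ + l₂ + l₃)) (w : Alg F l₁ l₂ l₃ Γ) :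
    Pd x ((Pi.single s w : Wt F l₁ l₂ l₃ Γ) c)
      = (Pi.single s (Pd x w) : Wt F l₁ l₂ l₃ Γ) c := by
  rcases eq_or_ne c s with h | h
  · subst h; simp
  · simp [Pi.single_eq_of_ne h]

end CorProof2
section CorProof3
variable {F l₁ l₂ l₃ Γ}

local notation "𝕞" => mono F l₁ l₂ l₃ Γ
local notation "Pd" => pd F l₁ l₂ l₃ Γ
local notation "𝔇" => Dpq F l₁ l₂ l₃ Γ
local notation "ac" => acoord F l₁ l₂ l₃ Γ
local notation "ic" => icoord l₁ l₂ l₃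
local notation "lo" => lower l₁ l₂ l₃
local notation "Br" => wbr F l₁ l₂ l₃ Γ

lemma Dpq_self (p : Fin (l₁ + l₂ + l₃)) (u : Alg F l₁ l₂ l₃ Γ) : 𝔇 p p u = 0 := by
  simp [Dpq]

lemma Dpq_swap (p q : Fin (l₁ + l₂ + l₃)) (u : Alg F l₁ l₂ l₃ Γ) : 𝔇 q p u = - 𝔇 p q u := by
  simp [Dpq]

lemma Dpq_zero (p q : Fin (l₁ + l₂ + l₃)) : 𝔇 p q (0 : Alg F l₁ l₂ l₃ Γ) = 0 := by
  simp [Dpq]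

lemma Dpq_add (p q : Fin (l₁ + l₂ + l₃)) (u v : Alg F l₁ l₂ l₃ Γ) :
    𝔇 p q (u + v) = 𝔇 p q u + 𝔇 p q v := by
  simp only [Dpq, map_add, Pi.single_add]
  abel

lemma Dpq_sub (p q : Fin (l₁ + l₂ + l₃)) (u v : Alg F l₁ l₂ l₃ Γ) :
    𝔇 p q (u - v) = 𝔇 p q u - 𝔇 p q v := by
  simp only [Dpq, map_sub, Pi.single_sub]
  abel

lemma Dpq_smul (p q : Fin (l₁ + l₂ + l₃)) (c : F) (u : Alg F l₁ l₂ l₃ Γ) :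
    𝔇 p q (c • u) = c • 𝔇 p q u := by
  simp only [Dpq, map_smul, Pi.single_smul, smul_sub]

lemma br_DD (p q r s : Fin (l₁ + l₂ + l₃)) (u v : Alg F l₁ l₂ l₃ Γ) :
    Br (𝔇 p q u) (𝔇 r s v)
      = 𝔇 p r (Pd q u * Pd s v) - 𝔇 p s (Pd q u * Pd r v)
        - 𝔇 q r (Pd p u * Pd s v) + 𝔇 q s (Pd p u * Pd r v) := by
  funext c
  simp only [wbr, Dpq, Pi.sub_apply, Pi.add_apply, Pi.neg_apply, map_sub, pd_pi_single]
  simp only [Pi.single_apply, sub_mul, mul_sub, ite_mul, mul_ite, zero_mul, mul_zero,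
    Finset.sum_sub_distrib, Finset.sum_ite_eq', Finset.mem_univ, if_true]
  simp only [pd_mul]
  rw [show Pd q (Pd p u) = Pd p (Pd q u) from pd_comm q p u,
    show Pd s (Pd r v) = Pd r (Pd s v) from pd_comm s r v]
  split_ifs <;>
    simp only [Finset.sum_sub_distrib, Finset.sum_ite_eq', Finset.mem_univ, if_true,
      Finset.sum_const_zero, sub_zero, zero_sub, mul_zero, zero_mul] <;>
    ring

lemma br_DD_same (p q : Fin (l₁ + l₂ + l₃)) (u v : Alg F l₁ l₂ l₃ Γ) :
    Br (𝔇 p q u) (𝔇 p q v) = 𝔇 p q (Pd p u * Pd q v - Pd q u * Pd p v) := by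
  rw [br_DD, Dpq_self, Dpq_self, Dpq_swap p q, Dpq_sub]
  abel

end CorProof3
section CorProof4
variable {F l₁ l₂ l₃ Γ}

local notation "𝕞" => mono F l₁ l₂ l₃ Γ
local notation "Pd" => pd F l₁ l₂ l₃ Γ
local notation "𝔇" => Dpq F l₁ l₂ l₃ Γ
local notation "ac" => acoord F l₁ l₂ l₃ Γ
local notation "ic" => icoord l₁ l₂ l₃
local notation "lo" => lower l₁ l₂ l₃
local notation "Br" => wbr F l₁ l₂ l₃ Γ

lemma wbr_zero_left (z : Wt F l₁ l₂ l₃ Γ) : Br 0 z = 0 := by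
  funext r; simp [wbr]

lemma wbr_zero_right (z : Wt F l₁ l₂ l₃ Γ) : Br z 0 = 0 := by
  funext r; simp [wbr]

lemma wbr_add_left (x y z : Wt F l₁ l₂ l₃ Γ) : Br (x + y) z = Br x z + Br y z := by
  funext r
  simp only [wbr, Pi.add_apply, map_add, add_mul, mul_add]
  rw [← Finset.sum_add_distrib]
  exact Finset.sum_congr rfl (fun _ _ => by ring)

lemma wbr_add_right (x y z : Wt F l₁ l₂ l₃ Γ) : Br z (x + y) = Br z x + Br z y := by
  funext r
  simp only [wbr, Pi.add_apply, map_add, add_mul, mul_add]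
  rw [← Finset.sum_add_distrib]
  exact Finset.sum_congr rfl (fun _ _ => by ring)

lemma wbr_smul_left (a : F) (x z : Wt F l₁ l₂ l₃ Γ) : Br (a • x) z = a • Br x z := by
  funext r
  simp only [wbr, Pi.smul_apply, map_smul, smul_mul_assoc, mul_smul_comm, ← smul_sub,
    ← Finset.smul_sum]

lemma wbr_smul_right (a : F) (x z : Wt F l₁ l₂ l₃ Γ) : Br z (a • x) = a • Br z x := by
  funext r
  simp only [wbr, Pi.smul_apply, map_smul, smul_mul_assoc, mul_smul_comm, ← smul_sub,
    ← Finset.smul_sum]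

lemma mem_liegen {s : Set (Wt F l₁ l₂ l₃ Γ)} {x : Wt F l₁ l₂ l₃ Γ} (hx : x ∈ s) :
    x ∈ liegen F l₁ l₂ l₃ Γ s := by
  unfold liegen
  rw [Submodule.mem_sInf]
  exact fun N hN => hN.1 hx

lemma liegen_br {s : Set (Wt F l₁ l₂ l₃ Γ)} {x y : Wt F l₁ l₂ l₃ Γ}
    (hx : x ∈ liegen F l₁ l₂ l₃ Γ s) (hy : y ∈ liegen F l₁ l₂ l₃ Γ s) :
    Br x y ∈ liegen F l₁ l₂ l₃ Γ s := by
  unfold liegen at *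
  rw [Submodule.mem_sInf] at *
  exact fun N hN => hN.2 x (hx N hN) y (hy N hN)

lemma liegen_le {s : Set (Wt F l₁ l₂ l₃ Γ)} {N : Submodule F (Wt F l₁ l₂ l₃ Γ)}
    (h1 : s ⊆ N) (h2 : ∀ x ∈ N, ∀ y ∈ N, Br x y ∈ N) :
    liegen F l₁ l₂ l₃ Γ s ≤ N :=
  sInf_le ⟨h1, h2⟩

lemma Ssub_br {x y : Wt F l₁ l₂ l₃ Γ} (hx : x ∈ Ssub F l₁ l₂ l₃ Γ)
    (hy : y ∈ Ssub F l₁ l₂ l₃ Γ) : Br x y ∈ Ssub F l₁ l₂ l₃ Γ := by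
  unfold Ssub at *
  have m : ∀ (a b : Fin (l₁ + l₂ + l₃)) (w : Alg F l₁ l₂ l₃ Γ),
      𝔇 a b w ∈ Submodule.span F {w | ∃ p q u, w = 𝔇 p q u} :=
    fun a b w => Submodule.subset_span ⟨a, b, w, rfl⟩
  induction hx, hy using Submodule.span_induction₂ with
  | mem_mem w1 w2 h1 h2 =>
    obtain ⟨p, q, u, rfl⟩ := h1
    obtain ⟨r, s, v, rfl⟩ := h2
    rw [br_DD]
    exact add_mem (sub_mem (sub_mem (m _ _ _) (m _ _ _)) (m _ _ _)) (m _ _ _)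
  | zero_left y hy => rw [wbr_zero_left]; exact zero_mem _
  | zero_right x hx => rw [wbr_zero_right]; exact zero_mem _
  | add_left x y z hx hy hz h1 h2 => rw [wbr_add_left]; exact add_mem h1 h2
  | add_right x y z hx hy hz h1 h2 => rw [wbr_add_right]; exact add_mem h1 h2
  | smul_left r x y hx hy h => rw [wbr_smul_left]; exact Submodule.smul_mem _ _ h
  | smul_right r x y hx hy h => rw [wbr_smul_right]; exact Submodule.smul_mem _ _ h

lemma exists_acoord_ne (hΓ : Nondeg F l₂ l₃ Γ) (p : Fin (l₁ + l₂ + l₃)) (hp : l₁ ≤ (p : ℕ)) :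
    ∃ α : Γ, ac p α ≠ 0 := by
  by_contra h
  push_neg at h
  have hc : (p : ℕ) - l₁ < l₂ + l₃ := by have := p.isLt; omega
  set c : Fin (l₂ + l₃) := ⟨(p : ℕ) - l₁, hc⟩ with hcdef
  have hker : (Γ : Set (Fin (l₂ + l₃) → F)) ⊆
      ↑(LinearMap.ker (LinearMap.proj (R := F) (φ := fun _ : Fin (l₂ + l₃) => F) c)) := by
    intro μ hμ
    have h2 := h ⟨μ, hμ⟩
    unfold acoord at h2
    rw [dif_pos hp] at h2
    simpa [LinearMap.mem_ker] using h2
  have hle : Submodule.span F (Γ : Set (Fin (l₂ + l₃) → F)) ≤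
      LinearMap.ker (LinearMap.proj (R := F) (φ := fun _ : Fin (l₂ + l₃) => F) c) :=
    Submodule.span_le.mpr hker
  rw [hΓ] at hle
  have h3 := hle (Submodule.mem_top (x := Pi.single c 1))
  rw [LinearMap.mem_ker, LinearMap.proj_apply] at h3
  simp at h3

end CorProof4
section CorProof5
variable {F l₁ l₂ l₃ Γ}

local notation "𝕞" => mono F l₁ l₂ l₃ Γ
local notation "Pd" => pd F l₁ l₂ l₃ Γ
local notation "𝔇" => Dpq F l₁ l₂ l₃ Γ
local notation "ac" => acoord F l₁ l₂ l₃ Γ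
local notation "ic" => icoord l₁ l₂ l₃
local notation "lo" => lower l₁ l₂ l₃
local notation "Br" => wbr F l₁ l₂ l₃ Γ
def genSet : Set (Wt F l₁ l₂ l₃ Γ) :=
  {w | ∃ (p q : Fin (l₁ + l₂ + l₃)) (α : Γ) (i : Fin (l₁ + l₂) →₀ ℕ),
    α ≠ 0 ∧ w = Dpq F l₁ l₂ l₃ Γ p q (mono F l₁ l₂ l₃ Γ α i)}
local notation "S₀" => genSet (F := F) (l₁ := l₁) (l₂ := l₂) (l₃ := l₃) (Γ := Γ)
local notation "L" => liegen F l₁ l₂ l₃ Γ S₀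

lemma keyB {p q : Fin (l₁ + l₂ + l₃)} (hp : (p : ℕ) < l₁ + l₂) (hpq : (p : ℕ) ≠ (q : ℕ))
    (α : Γ) (hα : ac q α ≠ 0) (i : Fin (l₁ + l₂) →₀ ℕ) :
    𝔇 p q (𝕞 0 i) ∈ L := by
  have hα0 : α ≠ 0 := fun h => hα (by rw [h, acoord_zero])
  have step : ∀ j : Fin (l₁ + l₂) →₀ ℕ,
      (ic q j ≠ 0 → 𝔇 p q (𝕞 0 (lo q (j + Finsupp.single ⟨(p : ℕ), hp⟩ 1))) ∈ L) →
      𝔇 p q (𝕞 0 j) ∈ L := by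
    intro j hrec
    set ep : Fin (l₁ + l₂) →₀ ℕ := Finsupp.single ⟨(p : ℕ), hp⟩ 1 with hep
    have hgen1 : 𝔇 p q (𝕞 α (j + ep)) ∈ L := mem_liegen ⟨p, q, α, j + ep, hα0, rfl⟩
    have hgen2 : 𝔇 p q (𝕞 (-α) 0) ∈ L := mem_liegen ⟨p, q, -α, 0, neg_ne_zero.mpr hα0, rfl⟩
    have hbr : Br (𝔇 p q (𝕞 α (j + ep))) (𝔇 p q (𝕞 (-α) 0)) ∈ L := liegen_br hgen1 hgen2
    have harg : Pd p (𝕞 α (j + ep)) * Pd q (𝕞 (-α) 0) - Pd q (𝕞 α (j + ep)) * Pd p (𝕞 (-α) 0)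
        = (-(ac q α * ((ic p j : F) + 1))) • 𝕞 0 j
          + (ac p α * (ic q j : F)) • 𝕞 0 (lo q (j + ep)) := by
      rw [pd_mono, pd_mono, pd_mono, pd_mono]
      rw [icoord_zero, icoord_add_single hp, lower_add_single hp,
        icoord_add_single_ne hp (Ne.symm hpq)]
      simp only [acoord_neg, icoord_zero, Nat.cast_zero, zero_smul, add_zero, neg_smul, Nat.cast_add,
        Nat.cast_one, add_mul, mul_add, smul_mul_assoc, mul_smul_comm, smul_smul, mul_neg,
        neg_neg, mono_mul, add_neg_cancel, neg_add_rev, smul_neg, zero_add]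
      try module
    have key : Br (𝔇 p q (𝕞 α (j + ep))) (𝔇 p q (𝕞 (-α) 0))
        = (-(ac q α * ((ic p j : F) + 1))) • 𝔇 p q (𝕞 0 j)
          + (ac p α * (ic q j : F)) • 𝔇 p q (𝕞 0 (lo q (j + ep))) := by
      rw [br_DD_same, harg, Dpq_add, Dpq_smul, Dpq_smul]
    have hY : (ac p α * (ic q j : F)) • 𝔇 p q (𝕞 0 (lo q (j + ep))) ∈ L := by
      by_cases h0 : ic q j = 0
      · rw [h0]
        simpa using Submodule.zero_mem _
      · exact Submodule.smul_mem _ _ (hrec h0)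
    have hX : (-(ac q α * ((ic p j : F) + 1))) • 𝔇 p q (𝕞 0 j) ∈ L := by
      have h5 := Submodule.sub_mem _ hbr hY
      rw [key] at h5
      simpa using h5
    have hc : (-(ac q α * ((ic p j : F) + 1))) ≠ 0 :=
      neg_ne_zero.mpr (mul_ne_zero hα (Nat.cast_add_one_ne_zero _))
    exact (Submodule.smul_mem_iff _ hc).mp hX
  suffices H : ∀ n (j : Fin (l₁ + l₂) →₀ ℕ), ic q j ≤ n → 𝔇 p q (𝕞 0 j) ∈ L from
    H (ic q i) i le_rfl
  intro n
  induction n with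
  | zero => exact fun j hj => step j (fun h => absurd (Nat.le_zero.mp hj) h)
  | succ n IH =>
    intro j hj
    refine step j (fun h => IH _ ?_)
    have hq : (q : ℕ) < l₁ + l₂ := by
      by_contra hq
      exact h (icoord_big hq j)
    rw [icoord_lower_self hq, icoord_add_single_ne hp (Ne.symm hpq)]
    omega

lemma keyT (h23 : 3 ≤ l₂ + l₃) (hΓ : Nondeg F l₂ l₃ Γ) {p q : Fin (l₁ + l₂ + l₃)}
    (hpl : (p : ℕ) < l₁) (hql : (q : ℕ) < l₁) (hpq : (p : ℕ) ≠ (q : ℕ))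
    (hp0 : ∀ β : Γ, ac p β = 0) (hq0 : ∀ β : Γ, ac q β = 0) (i : Fin (l₁ + l₂) →₀ ℕ) :
    𝔇 p q (𝕞 0 i) ∈ L := by
  have hM : l₁ < l₁ + l₂ + l₃ := by omega
  set M : Fin (l₁ + l₂ + l₃) := ⟨l₁, hM⟩ with hMdef
  have hMval : (M : ℕ) = l₁ := rfl
  obtain ⟨α, hα⟩ := exists_acoord_ne hΓ M (le_of_eq hMval.symm)
  have hα0 : α ≠ 0 := fun h => hα (by rw [h, acoord_zero])
  have hqM : (q : ℕ) ≠ (M : ℕ) := by rw [hMval]; omega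
  have hMq : ∀ k, 𝔇 M q (𝕞 0 k) ∈ L := by
    intro k
    have h6 := keyB (show (q : ℕ) < l₁ + l₂ by omega) hqM α hα k
    rw [show 𝔇 M q (𝕞 0 k) = -𝔇 q M (𝕞 0 k) from Dpq_swap q M _]
    exact neg_mem h6
  have step : ∀ j : Fin (l₁ + l₂) →₀ ℕ,
      (ic M j ≠ 0 → 𝔇 p q (𝕞 0 (lo M j)) ∈ L) → 𝔇 p q (𝕞 0 j) ∈ L := by
    intro j hrec
    have hgen1 : 𝔇 p M (𝕞 α j) ∈ L := mem_liegen ⟨p, M, α, j, hα0, rfl⟩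
    have hgen2 : 𝔇 M q (𝕞 (-α) 0) ∈ L := mem_liegen ⟨M, q, -α, 0, neg_ne_zero.mpr hα0, rfl⟩
    have hbr : Br (𝔇 p M (𝕞 α j)) (𝔇 M q (𝕞 (-α) 0)) ∈ L := liegen_br hgen1 hgen2
    have key : Br (𝔇 p M (𝕞 α j)) (𝔇 M q (𝕞 (-α) 0))
        = (ac M α * ac M α) • 𝔇 p q (𝕞 0 j)
          + (ac M α * (ic M j : F)) • 𝔇 p q (𝕞 0 (lo M j))
          + (-(ac M α * (ic p j : F))) • 𝔇 M q (𝕞 0 (lo p j)) := by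
      rw [br_DD p M M q]
      have h1 : Pd M (𝕞 α j) * Pd q (𝕞 (-α) 0) = 0 := by
        rw [pd_mono, pd_mono]
        simp [acoord_neg, hq0, icoord_zero]
      have h2 : Pd M (𝕞 α j) * Pd M (𝕞 (-α) 0)
          = (-(ac M α * ac M α)) • 𝕞 0 j + (-(ac M α * (ic M j : F))) • 𝕞 0 (lo M j) := by
        rw [pd_mono, pd_mono]
        simp only [acoord_neg, icoord_zero, Nat.cast_zero, zero_smul, add_zero, neg_smul,
          add_mul, smul_mul_assoc, mul_smul_comm, smul_smul, mul_neg, neg_neg, mono_mul,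
          add_neg_cancel, smul_neg, zero_add]
        try module
      have h3 : Pd p (𝕞 α j) * Pd M (𝕞 (-α) 0) = (-(ac M α * (ic p j : F))) • 𝕞 0 (lo p j) := by
        rw [pd_mono, pd_mono]
        simp only [hp0, zero_smul, zero_add, acoord_neg, icoord_zero, Nat.cast_zero,
          add_zero, neg_smul, smul_mul_assoc, mul_smul_comm, smul_smul, mul_neg, neg_neg,
          mono_mul, add_neg_cancel, smul_neg]
        try module
      rw [h1, h2, h3, Dpq_zero, Dpq_self, Dpq_add, Dpq_smul, Dpq_smul, Dpq_smul]
      module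
    have hY1 : (ac M α * (ic M j : F)) • 𝔇 p q (𝕞 0 (lo M j)) ∈ L := by
      by_cases h0 : ic M j = 0
      · rw [h0]
        simpa using Submodule.zero_mem _
      · exact Submodule.smul_mem _ _ (hrec h0)
    have hY2 : (-(ac M α * (ic p j : F))) • 𝔇 M q (𝕞 0 (lo p j)) ∈ L :=
      Submodule.smul_mem _ _ (hMq _)
    have hX : (ac M α * ac M α) • 𝔇 p q (𝕞 0 j) ∈ L := by
      have h4 := Submodule.sub_mem _ (Submodule.sub_mem _ hbr hY2) hY1
      rw [key] at h4
      simpa using h4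
    exact (Submodule.smul_mem_iff _ (mul_ne_zero hα hα)).mp hX
  suffices H : ∀ n (j : Fin (l₁ + l₂) →₀ ℕ), ic M j ≤ n → 𝔇 p q (𝕞 0 j) ∈ L from
    H (ic M i) i le_rfl
  intro n
  induction n with
  | zero => exact fun j hj => step j (fun h => absurd (Nat.le_zero.mp hj) h)
  | succ n IH =>
    intro j hj
    refine step j (fun h => IH _ ?_)
    have hMlt : (M : ℕ) < l₁ + l₂ := by
      by_contra hh
      exact h (icoord_big hh j)
    rw [icoord_lower_self hMlt]
    omega

lemma keyMain (h23 : 3 ≤ l₂ + l₃) (hΓ : Nondeg F l₂ l₃ Γ) (p q : Fin (l₁ + l₂ + l₃)) (i : Fin (l₁ + l₂) →₀ ℕ) :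
    𝔇 p q (𝕞 0 i) ∈ L := by
  rcases eq_or_ne (p : ℕ) (q : ℕ) with hpq | hpq
  · have hpq' : p = q := Fin.ext hpq
    rw [hpq', Dpq_self]
    exact zero_mem _
  by_cases hq : ∃ β : Γ, ac q β ≠ 0
  · obtain ⟨β, hβ⟩ := hq
    by_cases hp : (p : ℕ) < l₁ + l₂
    · exact keyB hp hpq β hβ i
    · by_cases hq2 : (q : ℕ) < l₁ + l₂
      · obtain ⟨γ, hγ⟩ := exists_acoord_ne hΓ p (by omega)
        rw [show 𝔇 p q (𝕞 0 i) = -𝔇 q p (𝕞 0 i) from Dpq_swap q p _]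
        exact neg_mem (keyB hq2 (Ne.symm hpq) γ hγ i)
      · have e0 : ∀ r : Fin (l₁ + l₂ + l₃), ¬ (r : ℕ) < l₁ + l₂ → Pd r (𝕞 0 i) = 0 := by
          intro r hr
          rw [pd_mono, acoord_zero, icoord_big hr]
          simp
        have hD0 : 𝔇 p q (𝕞 0 i) = 0 := by
          unfold Dpq
          rw [e0 p hp, e0 q hq2]
          simp
        rw [hD0]
        exact zero_mem _
  · push_neg at hq
    have hql : (q : ℕ) < l₁ := by
      by_contra hh
      obtain ⟨β, hβ⟩ := exists_acoord_ne hΓ q (by omega)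
      exact hβ (hq β)
    by_cases hp : ∃ γ : Γ, ac p γ ≠ 0
    · obtain ⟨γ, hγ⟩ := hp
      rw [show 𝔇 p q (𝕞 0 i) = -𝔇 q p (𝕞 0 i) from Dpq_swap q p _]
      exact neg_mem (keyB (by omega) (Ne.symm hpq) γ hγ i)
    · push_neg at hp
      have hpl : (p : ℕ) < l₁ := by
        by_contra hh
        obtain ⟨γ, hγ⟩ := exists_acoord_ne hΓ p (by omega)
        exact hγ (hp γ)
      exact keyT h23 hΓ hpl hql hpq hp hq i

lemma Dpq_mem_liegen (h23 : 3 ≤ l₂ + l₃) (hΓ : Nondeg F l₂ l₃ Γ) (p q : Fin (l₁ + l₂ + l₃))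
    (u : Alg F l₁ l₂ l₃ Γ) : 𝔇 p q u ∈ L := by
  induction u using AddMonoidAlgebra.induction_on with
  | add f g hf hg => rw [Dpq_add]; exact add_mem hf hg
  | smul r f hf => rw [Dpq_smul]; exact Submodule.smul_mem _ _ hf
  | of g =>
    rw [of_eq_mono]
    rcases eq_or_ne g.1 0 with h0 | h0
    · rw [h0]
      exact keyMain h23 hΓ p q g.2
    · exact mem_liegen ⟨p, q, g.1, g.2, h0, rfl⟩

end CorProof5
/-- Corollary 2.2: if `l₁+l₂ ≥ 3`, `l₂+l₃ ≥ 3` and `Γ` is nondegenerate, then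
`S(l₁,l₂,l₃;0,Γ)` is generated as a Lie algebra by
`{D_{p,q}(x^α t^i) : p,q ∈ {1,…,l}, α ∈ Γ∖{0}, i ∈ ℕ^{l₁+l₂}}`; in particular every
`D_{p,q}(t^i)` lies in the Lie subalgebra generated by this set. -/
theorem stmt7 [IsAlgClosed F] [CharZero F]
    (h12 : 3 ≤ l₁ + l₂) (h23 : 3 ≤ l₂ + l₃) (hΓ : Nondeg F l₂ l₃ Γ) :
    liegen F l₁ l₂ l₃ Γ
        {w | ∃ (p q : Fin (l₁ + l₂ + l₃)) (α : Γ) (i : Fin (l₁ + l₂) →₀ ℕ), α ≠ 0 ∧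
            w = Dpq F l₁ l₂ l₃ Γ p q (mono F l₁ l₂ l₃ Γ α i)} =
      Ssub F l₁ l₂ l₃ Γ ∧
    ∀ (p q : Fin (l₁ + l₂ + l₃)) (i : Fin (l₁ + l₂) →₀ ℕ),
      Dpq F l₁ l₂ l₃ Γ p q (mono F l₁ l₂ l₃ Γ 0 i) ∈
        liegen F l₁ l₂ l₃ Γ
          {w | ∃ (p q : Fin (l₁ + l₂ + l₃)) (α : Γ) (i : Fin (l₁ + l₂) →₀ ℕ), α ≠ 0 ∧
            w = Dpq F l₁ l₂ l₃ Γ p q (mono F l₁ l₂ l₃ Γ α i)} := by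
  constructor
  · apply le_antisymm
    · apply liegen_le
      · rintro w ⟨p, q, α, i, hα, rfl⟩
        exact Submodule.subset_span ⟨p, q, _, rfl⟩
      · intro x hx y hy
        exact Ssub_br hx hy
    · refine Submodule.span_le.mpr ?_
      rintro w ⟨p, q, u, rfl⟩
      exact Dpq_mem_liegen h23 hΓ p q u
  · intro p q i
    exact keyMain h23 hΓ p q i

end SDF
end

section
/- In the module A_μ over S(l₁,l₂,l₃;0,Γ), for every p ∈ {1,…,l}, the element ∂_p (when l₂+l₃ contributes, realized inside S via the generating relations) acts by ∂_p · v_{β,i} = (β_p + μ_p) v_{β,i} + i_p v_{β,i−1_[p]}; consequently each v_{β,i} is a generalized weight vector of weight β + μ, and the generalized weight space decomposition of A_μ is A_μ = ⊕_{β∈Γ} span{v_{β,i} : i ∈ ℕ^{l₁+l₂}}, with each weight space (A_μ)^{(0)}_{β+μ} = F·v_{β,0} one-dimensional. -/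
open scoped BigOperators

namespace SDF

variable (F : Type) [Field F] [IsAlgClosed F] [CharZero F]
variable (l₁ l₂ l₃ : ℕ) (Γ : AddSubgroup (Fin (l₂ + l₃) → F))

set_option linter.unusedSectionVars false

variable {F l₁ l₂ l₃ Γ}

lemma pd_mono_s13 (p : Fin (l₁ + l₂ + l₃)) (β : Γ) (i : Fin (l₁ + l₂) →₀ ℕ) :
    pd F l₁ l₂ l₃ Γ p (mono F l₁ l₂ l₃ Γ β i) =
      acoord F l₁ l₂ l₃ Γ p β • mono F l₁ l₂ l₃ Γ β i
        + (icoord l₁ l₂ l₃ p i : F) • mono F l₁ l₂ l₃ Γ β (lower l₁ l₂ l₃ p i) := by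
  change Finsupp.lsum F _ (Finsupp.single (β, i) 1) = _
  erw [Finsupp.lsum_single, LinearMap.toSpanSingleton_apply, one_smul]

lemma pd_single (p : Fin (l₁ + l₂ + l₃)) (β : Γ) (i : Fin (l₁ + l₂) →₀ ℕ) (c : F) :
    pd F l₁ l₂ l₃ Γ p (AddMonoidAlgebra.single (β, i) c) =
      c • (acoord F l₁ l₂ l₃ Γ p β • mono F l₁ l₂ l₃ Γ β i
        + (icoord l₁ l₂ l₃ p i : F) • mono F l₁ l₂ l₃ Γ β (lower l₁ l₂ l₃ p i)) := by
  change Finsupp.lsum F _ (Finsupp.single (β, i) c) = _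
  erw [Finsupp.lsum_single, LinearMap.toSpanSingleton_apply]

lemma actW_wdelta (μ : Fin (l₂ + l₃) → F) (p : Fin (l₁ + l₂ + l₃)) :
    actW F l₁ l₂ l₃ Γ μ (wdelta F l₁ l₂ l₃ Γ p) =
      pd F l₁ l₂ l₃ Γ p + fcoord F l₁ l₂ l₃ p μ • LinearMap.id := by
  rw [actW, Fintype.sum_eq_single p]
  · have h1 : wdelta F l₁ l₂ l₃ Γ p p = 1 := Pi.single_eq_same p 1
    ext v
    simp [h1]
  · intro q hq
    have : wdelta F l₁ l₂ l₃ Γ p q = 0 := Pi.single_eq_of_ne hq 1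
    ext v
    simp [this]

lemma act_mono (μ : Fin (l₂ + l₃) → F) (p : Fin (l₁ + l₂ + l₃)) (β : Γ)
    (i : Fin (l₁ + l₂) →₀ ℕ) :
    actW F l₁ l₂ l₃ Γ μ (wdelta F l₁ l₂ l₃ Γ p) (mono F l₁ l₂ l₃ Γ β i) =
      (acoord F l₁ l₂ l₃ Γ p β + fcoord F l₁ l₂ l₃ p μ) • mono F l₁ l₂ l₃ Γ β i
        + (icoord l₁ l₂ l₃ p i : F) • mono F l₁ l₂ l₃ Γ β (lower l₁ l₂ l₃ p i) := by
  rw [actW_wdelta]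
  simp only [LinearMap.add_apply, LinearMap.smul_apply, LinearMap.id_apply, pd_mono_s13, add_smul]
  abel

lemma icoord_lower (p : Fin (l₁ + l₂ + l₃)) (i : Fin (l₁ + l₂) →₀ ℕ) :
    icoord l₁ l₂ l₃ p (lower l₁ l₂ l₃ p i) = icoord l₁ l₂ l₃ p i - 1 := by
  rw [icoord, lower]
  split
  next h =>
    rw [icoord, dif_pos h]
    simp [Finsupp.tsub_apply]
  next h =>
    rw [icoord, dif_neg h]

lemma T_mono (μ : Fin (l₂ + l₃) → F) (p : Fin (l₁ + l₂ + l₃)) (β : Γ)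
    (i : Fin (l₁ + l₂) →₀ ℕ) :
    ((actW F l₁ l₂ l₃ Γ μ (wdelta F l₁ l₂ l₃ Γ p)
        - (acoord F l₁ l₂ l₃ Γ p β + fcoord F l₁ l₂ l₃ p μ) • 1 :
          Module.End F (Alg F l₁ l₂ l₃ Γ)))
      (mono F l₁ l₂ l₃ Γ β i)
      = (icoord l₁ l₂ l₃ p i : F) • mono F l₁ l₂ l₃ Γ β (lower l₁ l₂ l₃ p i) := by
  rw [LinearMap.sub_apply, act_mono, LinearMap.smul_apply, Module.End.one_apply,
    add_sub_cancel_left]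

lemma act_nilp (μ : Fin (l₂ + l₃) → F) (p : Fin (l₁ + l₂ + l₃)) (β : Γ) (n : ℕ) :
    ∀ i : Fin (l₁ + l₂) →₀ ℕ, icoord l₁ l₂ l₃ p i ≤ n →
    (((actW F l₁ l₂ l₃ Γ μ (wdelta F l₁ l₂ l₃ Γ p)
        - (acoord F l₁ l₂ l₃ Γ p β + fcoord F l₁ l₂ l₃ p μ) • 1 :
          Module.End F (Alg F l₁ l₂ l₃ Γ))) ^ (n + 1))
      (mono F l₁ l₂ l₃ Γ β i) = 0 := by
  induction n with
  | zero =>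
    intro i hi
    rw [pow_one, T_mono]
    interval_cases h : icoord l₁ l₂ l₃ p i
    simp [h]
  | succ n ih =>
    intro i hi
    rw [pow_succ, Module.End.mul_apply, T_mono, map_smul, ih _ (by rw [icoord_lower]; omega),
      smul_zero]

lemma sub_add_single {n : ℕ} {i : Fin n →₀ ℕ} {p : Fin n} (h : i p ≠ 0) :
    i - Finsupp.single p 1 + Finsupp.single p 1 = i :=
  tsub_add_cancel_of_le (by rwa [Finsupp.single_le_iff, Nat.one_le_iff_ne_zero])

lemma alg_smul_apply (c : F) (v : Alg F l₁ l₂ l₃ Γ) (g : ↥Γ × (Fin (l₁ + l₂) →₀ ℕ)) :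
    (c • v).coeff g = c * v.coeff g := rfl

lemma alg_add_apply (v w : Alg F l₁ l₂ l₃ Γ) (g : ↥Γ × (Fin (l₁ + l₂) →₀ ℕ)) :
    (v + w).coeff g = v.coeff g + w.coeff g := rfl

lemma coeff_pd (p : Fin (l₁ + l₂ + l₃)) (v : Alg F l₁ l₂ l₃ Γ) (γ : Γ)
    (i : Fin (l₁ + l₂) →₀ ℕ) :
    (pd F l₁ l₂ l₃ Γ p v).coeff (γ, i) =
      acoord F l₁ l₂ l₃ Γ p γ * v.coeff (γ, i)
        + (if h : (p : ℕ) < l₁ + l₂ then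
            ((i ⟨(p : ℕ), h⟩ : F) + 1) * v.coeff (γ, i + Finsupp.single ⟨(p : ℕ), h⟩ 1)
          else 0) := by
  induction v using AddMonoidAlgebra.induction_linear with
  | zero => simp
  | add f g hf hg =>
    rw [map_add, alg_add_apply, hf, hg, alg_add_apply]
    simp only [alg_add_apply]
    split
    · push_cast; ring
    · push_cast; ring
  | single a c =>
    obtain ⟨γ', i'⟩ := a
    classical
    simp only [pd_single, alg_smul_apply, alg_add_apply, mono,
      AddMonoidAlgebra.coeff_single, Finsupp.single_apply, smul_eq_mul]
    by_cases h : (p : ℕ) < l₁ + l₂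
    · rw [dif_pos h]
      set p' : Fin (l₁ + l₂) := ⟨(p : ℕ), h⟩ with hp'
      have hic : icoord l₁ l₂ l₃ p i' = i' p' := by rw [icoord, dif_pos h]
      have hlo : lower l₁ l₂ l₃ p i' = i' - Finsupp.single p' 1 := by rw [lower, dif_pos h]
      rw [hic, hlo]
      by_cases hg : γ' = γ
      · subst hg
        by_cases h2 : i' = i + Finsupp.single p' 1
        · subst h2
          have hne1 : ¬((γ', i + Finsupp.single p' 1) = (γ', i)) := by
            intro hcon
            have := congrArg (fun z => z.2 p') hcon
            simp [Finsupp.add_apply, Finsupp.single_eq_same] at this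
          have heq2 : (γ', i + Finsupp.single p' 1 - Finsupp.single p' 1) = (γ', i) := by
            rw [Prod.mk.injEq]
            exact ⟨rfl, add_tsub_cancel_right _ _⟩
          rw [if_neg hne1, if_pos heq2, if_neg hne1, if_pos rfl]
          have h5 : ((i + Finsupp.single p' 1 : Fin (l₁ + l₂) →₀ ℕ)) p' = i p' + 1 := by
            simp [Finsupp.add_apply, Finsupp.single_eq_same]
          rw [h5]
          push_cast
          ring
        · have hne2 : ¬((γ', i') = (γ', i + Finsupp.single p' 1)) := by
            simp only [Prod.mk.injEq, true_and]; exact h2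
          rw [if_neg hne2]
          by_cases h1 : i' = i
          · subst h1
            rw [if_pos rfl]
            by_cases hz : i' p' = 0
            · have : i' - Finsupp.single p' 1 = i' := by
                ext q
                rw [Finsupp.tsub_apply, Finsupp.single_apply]
                by_cases hq : p' = q
                · subst hq; simp [hz]
                · simp [hq]
              rw [this, if_pos rfl, hz]
              simp only [if_pos trivial, if_true]
              push_cast
              ring
            · have hne3 : ¬((γ', i' - Finsupp.single p' 1) = (γ', i')) := by
                intro hcon
                have := congrArg (fun z => z.2 p') hcon
                simp only [Finsupp.tsub_apply, Finsupp.single_eq_same] at this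
                omega
              rw [if_neg hne3]
              simp only [if_pos trivial, if_true]
              push_cast
              ring
          · have hne4 : ¬((γ', i') = (γ', i)) := by
              simp only [Prod.mk.injEq, true_and]; exact h1
            rw [if_neg hne4, if_neg hne4]
            have hne5 : ¬((γ', i' - Finsupp.single p' 1) = (γ', i)) := by
              intro hcon
              rw [Prod.mk.injEq] at hcon
              by_cases hz : i' p' = 0
              · have : i' - Finsupp.single p' 1 = i' := by
                  ext q
                  rw [Finsupp.tsub_apply, Finsupp.single_apply]
                  by_cases hq : p' = q
                  · subst hq; simp [hz]
                  · simp [hq]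
                exact h1 (by rw [← this, hcon.2])
              · exact h2 (by rw [← hcon.2, sub_add_single hz])
            rw [if_neg hne5]
            push_cast
            ring
      · have hg1 : ∀ j : Fin (l₁ + l₂) →₀ ℕ, ¬((γ', j) = (γ, i)) := by
          intro j hcon; exact hg (congrArg Prod.fst hcon)
        have hg2 : ¬((γ', i') = (γ, i + Finsupp.single p' 1)) := by
          intro hcon; exact hg (congrArg Prod.fst hcon)
        rw [if_neg (hg1 _), if_neg (hg1 _), if_neg (hg1 _), if_neg hg2]
        push_cast
        ring
    · rw [dif_neg h]
      have hic : icoord l₁ l₂ l₃ p i' = 0 := by rw [icoord, dif_neg h]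
      have hlo : lower l₁ l₂ l₃ p i' = i' := by rw [lower, dif_neg h]
      rw [hic, hlo]
      by_cases he : (γ', i') = (γ, i)
      · simp only [if_pos he]
        rw [show γ' = γ from congrArg Prod.fst he]
        push_cast
        ring
      · simp only [if_neg he]
        push_cast
        ring

lemma weight_space (μ : Fin (l₂ + l₃) → F) (β : Γ) :
    {v : Alg F l₁ l₂ l₃ Γ | ∀ p : Fin (l₁ + l₂ + l₃),
        actW F l₁ l₂ l₃ Γ μ (wdelta F l₁ l₂ l₃ Γ p) v =
          (acoord F l₁ l₂ l₃ Γ p β + fcoord F l₁ l₂ l₃ p μ) • v} =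
      ↑(Submodule.span F {mono F l₁ l₂ l₃ Γ β 0}) := by
  ext v
  simp only [Set.mem_setOf_eq, SetLike.mem_coe, Submodule.mem_span_singleton]
  constructor
  · intro hv
    classical
    have hpd : ∀ p, pd F l₁ l₂ l₃ Γ p v = acoord F l₁ l₂ l₃ Γ p β • v := by
      intro p
      have h1 := hv p
      rw [actW_wdelta, LinearMap.add_apply, LinearMap.smul_apply, LinearMap.id_apply,
        add_smul] at h1
      exact add_right_cancel h1
    have key : ∀ (p : Fin (l₁ + l₂ + l₃)) (γ : Γ) (i : Fin (l₁ + l₂) →₀ ℕ),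
        acoord F l₁ l₂ l₃ Γ p γ * v.coeff (γ, i)
          + (if h : (p : ℕ) < l₁ + l₂ then
              ((i ⟨(p : ℕ), h⟩ : F) + 1) * v.coeff (γ, i + Finsupp.single ⟨(p : ℕ), h⟩ 1)
            else 0)
          = acoord F l₁ l₂ l₃ Γ p β * v.coeff (γ, i) := by
      intro p γ i
      rw [← coeff_pd, hpd p]
      exact alg_smul_apply _ _ _
    -- Step A : components with γ ≠ β vanish
    have hA : ∀ γ : Γ, γ ≠ β → ∀ i, v.coeff (γ, i) = 0 := by
      intro γ hγ
      have hex : ∃ q : Fin (l₂ + l₃), (γ : Fin (l₂ + l₃) → F) q ≠ (β : Fin (l₂ + l₃) → F) q := by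
        by_contra hq
        push_neg at hq
        exact hγ (Subtype.coe_injective (funext hq))
      obtain ⟨q, hq⟩ := hex
      have hql := q.isLt
      set p : Fin (l₁ + l₂ + l₃) := ⟨l₁ + (q : ℕ), by omega⟩ with hp
      have hap : ∀ δ : Γ, acoord F l₁ l₂ l₃ Γ p δ = (δ : Fin (l₂ + l₃) → F) q := by
        intro δ
        rw [acoord, dif_pos (Nat.le_add_right l₁ (q : ℕ))]
        exact congrArg (δ : Fin (l₂ + l₃) → F)
          (Fin.ext (by have hpv : (p : ℕ) = l₁ + (q : ℕ) := rfl; simp [hpv]))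
      have hd : acoord F l₁ l₂ l₃ Γ p γ - acoord F l₁ l₂ l₃ Γ p β ≠ 0 := by
        rw [hap, hap]
        exact sub_ne_zero.mpr hq
      by_cases h : (p : ℕ) < l₁ + l₂
      · set p' : Fin (l₁ + l₂) := ⟨(p : ℕ), h⟩ with hp'
        have hstep : ∀ i, v.coeff (γ, i + Finsupp.single p' 1) = 0 → v.coeff (γ, i) = 0 := by
          intro i h0
          have hk := key p γ i
          rw [dif_pos h] at hk
          rw [← hp', h0, mul_zero, add_zero] at hk
          have hz : (acoord F l₁ l₂ l₃ Γ p γ - acoord F l₁ l₂ l₃ Γ p β) * v.coeff (γ, i) = 0 := by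
            rw [sub_mul, hk, sub_self]
          exact (mul_eq_zero.mp hz).resolve_left hd
        have hdesc : ∀ (m : ℕ) (i), v.coeff (γ, i + Finsupp.single p' m) = 0 → v.coeff (γ, i) = 0 := by
          intro m
          induction m with
          | zero => intro i h0; simpa using h0
          | succ m ih =>
            intro i h0
            apply ih
            apply hstep
            rw [add_assoc, ← Finsupp.single_add]
            exact h0
        intro i
        apply hdesc (Finset.sum v.coeff.support (fun g => g.2 p') + 1) i
        by_contra h0
        have hmem : (γ, i + Finsupp.single p' (Finset.sum v.coeff.support (fun g => g.2 p') + 1))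
            ∈ v.coeff.support := Finsupp.mem_support_iff.mpr h0
        have hle := Finset.single_le_sum (f := fun g : ↥Γ × (Fin (l₁ + l₂) →₀ ℕ) => g.2 p')
          (fun _ _ => Nat.zero_le _) hmem
        simp only [Finsupp.add_apply, Finsupp.single_eq_same] at hle
        omega
      · intro i
        have hk := key p γ i
        rw [dif_neg h, add_zero] at hk
        have hz : (acoord F l₁ l₂ l₃ Γ p γ - acoord F l₁ l₂ l₃ Γ p β) * v.coeff (γ, i) = 0 := by
          rw [sub_mul, hk, sub_self]
        exact (mul_eq_zero.mp hz).resolve_left hd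
    -- Step B : components with γ = β, i ≠ 0 vanish
    have hBstep : ∀ (p' : Fin (l₁ + l₂)) (i), v.coeff (β, i + Finsupp.single p' 1) = 0 := by
      intro p' i
      have hlt : (p' : ℕ) < l₁ + l₂ := p'.isLt
      set p : Fin (l₁ + l₂ + l₃) := ⟨(p' : ℕ), by omega⟩ with hp
      have hk := key p β i
      rw [dif_pos hlt] at hk
      have hpe : (⟨(p : ℕ), hlt⟩ : Fin (l₁ + l₂)) = p' := by ext; rfl
      rw [hpe] at hk
      have hx : ((i p' : F) + 1) * v.coeff (β, i + Finsupp.single p' 1) = 0 := by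
        linear_combination hk
      have hne : ((i p' : F) + 1) ≠ 0 := Nat.cast_add_one_ne_zero _
      exact (mul_eq_zero.mp hx).resolve_left hne
    have hB : ∀ i : Fin (l₁ + l₂) →₀ ℕ, i ≠ 0 → v.coeff (β, i) = 0 := by
      intro i hi
      have hex : ∃ p' : Fin (l₁ + l₂), i p' ≠ 0 := by
        by_contra hq
        push_neg at hq
        exact hi (Finsupp.ext hq)
      obtain ⟨p', hp'⟩ := hex
      rw [← sub_add_single hp']
      exact hBstep p' _
    refine ⟨v.coeff (β, 0), ?_⟩
    ext g
    obtain ⟨γ, i⟩ := g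
    rw [alg_smul_apply, mono, AddMonoidAlgebra.coeff_single, Finsupp.single_apply]
    by_cases he : ((β, (0 : Fin (l₁ + l₂) →₀ ℕ)) : ↥Γ × (Fin (l₁ + l₂) →₀ ℕ)) = (γ, i)
    · rw [if_pos he, mul_one]
      obtain ⟨h1, h2⟩ := Prod.mk.injEq .. ▸ he
      rw [h1, h2]
    · rw [if_neg he, mul_zero]
      symm
      by_cases hg : γ = β
      · subst hg
        have : i ≠ 0 := by
          intro h0
          exact he (by rw [h0])
        exact hB i this
      · exact hA γ hg i
  · rintro ⟨c, rfl⟩ p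
    rw [map_smul, act_mono]
    have : icoord l₁ l₂ l₃ p (0 : Fin (l₁ + l₂) →₀ ℕ) = 0 := by
      rw [icoord]
      split <;> simp
    rw [this]
    push_cast
    rw [zero_smul, add_zero, smul_comm]

/-- In the module `A_μ`: each `∂_p` acts by
`∂_p · v_{β,i} = (β_p + μ_p) v_{β,i} + i_p v_{β,i−1_[p]}`; consequently each `v_{β,i}` is a
generalized weight vector of weight `β+μ`, the generalized weight spaces
`span{v_{β,i} : i}` exhaust `A_μ`, and each weight space `(A_μ)^{(0)}_{β+μ}` is the line
`F·v_{β,0}`. -/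
theorem stmt13 [IsAlgClosed F] [CharZero F]
    (h12 : 3 ≤ l₁ + l₂) (h23 : 3 ≤ l₂ + l₃) (hΓ : Nondeg F l₂ l₃ Γ)
    (μ : Fin (l₂ + l₃) → F) :
    (∀ (p : Fin (l₁ + l₂ + l₃)) (β : Γ) (i : Fin (l₁ + l₂) →₀ ℕ),
        actW F l₁ l₂ l₃ Γ μ (wdelta F l₁ l₂ l₃ Γ p) (mono F l₁ l₂ l₃ Γ β i) =
          (acoord F l₁ l₂ l₃ Γ p β + fcoord F l₁ l₂ l₃ p μ) • mono F l₁ l₂ l₃ Γ β i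
            + (icoord l₁ l₂ l₃ p i : F) •
                mono F l₁ l₂ l₃ Γ β (lower l₁ l₂ l₃ p i)) ∧
    (∀ (β : Γ) (i : Fin (l₁ + l₂) →₀ ℕ) (p : Fin (l₁ + l₂ + l₃)), ∃ n : ℕ,
        ((actW F l₁ l₂ l₃ Γ μ (wdelta F l₁ l₂ l₃ Γ p)
            - (acoord F l₁ l₂ l₃ Γ p β + fcoord F l₁ l₂ l₃ p μ) • 1 :
              Module.End F (Alg F l₁ l₂ l₃ Γ)) ^ n)
          (mono F l₁ l₂ l₃ Γ β i) = 0) ∧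
    (∀ β : Γ,
        {v : Alg F l₁ l₂ l₃ Γ | ∀ p : Fin (l₁ + l₂ + l₃),
            actW F l₁ l₂ l₃ Γ μ (wdelta F l₁ l₂ l₃ Γ p) v =
              (acoord F l₁ l₂ l₃ Γ p β + fcoord F l₁ l₂ l₃ p μ) • v} =
          ↑(Submodule.span F {mono F l₁ l₂ l₃ Γ β 0})) ∧
    (⨆ β : Γ, Submodule.span F {v : Alg F l₁ l₂ l₃ Γ |
        ∃ i : Fin (l₁ + l₂) →₀ ℕ, v = mono F l₁ l₂ l₃ Γ β i}) = ⊤ := by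
  refine ⟨fun p β i => act_mono μ p β i, fun β i p => ?_, fun β => weight_space μ β, ?_⟩
  · exact ⟨icoord l₁ l₂ l₃ p i + 1, act_nilp μ p β _ i le_rfl⟩
  · rw [eq_top_iff]
    intro x _
    induction x using AddMonoidAlgebra.induction_linear with
    | zero => exact Submodule.zero_mem _
    | add f g hf hg => exact Submodule.add_mem _ (hf trivial) (hg trivial)
    | single a c =>
      obtain ⟨β, i⟩ := a
      have hx : (AddMonoidAlgebra.single (β, i) c : Alg F l₁ l₂ l₃ Γ) = c • mono F l₁ l₂ l₃ Γ β i := by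
        rw [mono]
        rw [AddMonoidAlgebra.smul_single', mul_one]
      rw [hx]
      refine Submodule.smul_mem _ c ?_
      exact Submodule.mem_iSup_of_mem β (Submodule.subset_span ⟨i, rfl⟩)

end SDF
end
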